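/- Let p be an odd prime, n a positive integer, and f : V_n → Z_{p^k} a generalized bent function whose dual f* is also generalized bent. Then f**(x) = f(−x) for all x ∈ V_n, where f** is the dual of f*. -/

import Mathlib

open Finset

/-- `chr m z = ζ_m ^ z`, the additive character sending `z ∈ ℤ/m` to `e^{2πi z/m}`. -/
noncomputable def chr (m : ℕ) (z : ZMod m) : ℂ :=
  Complex.exp (2 * Real.pi * Complex.I * (z.val : ℂ) / (m : ℂ))

lemma chr_eq_pow (m : ℕ) [NeZero m] (z : ZMod m) :
    chr m z = Complex.exp (2 * Real.pi * Complex.I / m) ^ z.val := by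
  rw [chr, ← Complex.exp_nat_mul]; ring_nf

lemma zeta_pow_m (m : ℕ) [NeZero m] :
    Complex.exp (2 * Real.pi * Complex.I / m) ^ m = 1 := by
  rw [← Complex.exp_nat_mul, mul_div_cancel₀ _ (by exact_mod_cast (NeZero.ne m) : (m:ℂ) ≠ 0)]
  simpa [mul_comm, mul_assoc, mul_left_comm] using Complex.exp_two_pi_mul_I

lemma zeta_pow_mod (m : ℕ) [NeZero m] (a : ℕ) :
    Complex.exp (2 * Real.pi * Complex.I / m) ^ (a % m) =
    Complex.exp (2 * Real.pi * Complex.I / m) ^ a := by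
  conv_rhs => rw [← Nat.div_add_mod a m]
  rw [pow_add, pow_mul, zeta_pow_m, one_pow, one_mul]

lemma chr_add (m : ℕ) [NeZero m] (a b : ZMod m) :
    chr m (a + b) = chr m a * chr m b := by
  rw [chr_eq_pow, chr_eq_pow, chr_eq_pow, ZMod.val_add, zeta_pow_mod, pow_add]

lemma chr_zero (m : ℕ) [NeZero m] : chr m 0 = 1 := by
  simp [chr_eq_pow, ZMod.val_zero]

lemma chr_pow_eq_one (m : ℕ) [NeZero m] (z : ZMod m) : chr m z ^ m = 1 := by
  rw [chr_eq_pow, ← pow_mul, mul_comm (z.val) m, pow_mul, zeta_pow_m, one_pow]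

lemma chr_mul_neg (m : ℕ) [NeZero m] (z : ZMod m) : chr m z * chr m (-z) = 1 := by
  rw [← chr_add, add_neg_cancel, chr_zero]

lemma chr_eq_one_iff (m : ℕ) [NeZero m] (z : ZMod m) : chr m z = 1 ↔ z = 0 := by
  constructor
  · intro h
    rw [chr, Complex.exp_eq_one_iff] at h
    obtain ⟨j, hj⟩ := h
    have hm : (m:ℂ) ≠ 0 := by exact_mod_cast NeZero.ne m
    have h2 : (2:ℂ) * Real.pi * Complex.I ≠ 0 := by
      simp [Real.pi_ne_zero, Complex.I_ne_zero]
    rw [div_eq_iff hm] at hj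
    have hval : (z.val : ℂ) = (j : ℂ) * m := by
      apply mul_left_cancel₀ h2
      rw [hj]; ring
    have hz : (z.val : ℤ) = j * m := by exact_mod_cast hval
    have hv : (z.val : ℤ) < m := by exact_mod_cast ZMod.val_lt z
    have hv0 : (0:ℤ) ≤ (z.val : ℤ) := by positivity
    have hm0 : (0:ℤ) < m := by exact_mod_cast Nat.pos_of_ne_zero (NeZero.ne m)
    have hj0 : j = 0 := by
      rcases lt_trichotomy j 0 with hlt | heq | hgt
      · have : j * (m:ℤ) ≤ (-1) * m := by
          apply mul_le_mul_of_nonneg_right (by omega) (le_of_lt hm0)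
        omega
      · exact heq
      · have : (1:ℤ) * m ≤ j * m := by
          apply mul_le_mul_of_nonneg_right (by omega) (le_of_lt hm0)
        omega
    have : z.val = 0 := by
      rw [hj0, zero_mul] at hz; exact_mod_cast hz
    exact (ZMod.val_eq_zero z).mp this
  · rintro rfl; exact chr_zero m

lemma chr_sum (m : ℕ) [NeZero m] {ι : Type*} (s : Finset ι) (g : ι → ZMod m) :
    chr m (∑ i ∈ s, g i) = ∏ i ∈ s, chr m (g i) := by
  induction s using Finset.cons_induction with
  | empty => simp [chr_zero]
  | cons a s ha ih => rw [Finset.sum_cons, Finset.prod_cons, chr_add, ih]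

lemma chr_ne_one (p : ℕ) [NeZero p] (hp : 1 < p) : chr p (1 : ZMod p) ≠ 1 := by
  haveI : Fact (1 < p) := ⟨hp⟩
  intro h
  exact one_ne_zero ((chr_eq_one_iff p (1 : ZMod p)).mp h)

lemma sum_chr_eq_zero (p : ℕ) [NeZero p] (hp : 1 < p) :
    ∑ c : ZMod p, chr p c = 0 := by
  have h2 : ∑ c : ZMod p, chr p (1 + c) = ∑ c : ZMod p, chr p c :=
    Fintype.sum_bijective (fun c => 1 + c) (Equiv.addLeft (1 : ZMod p)).bijective _ _ (fun c => rfl)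
  simp_rw [chr_add] at h2
  rw [← Finset.mul_sum] at h2
  have hne := chr_ne_one p hp
  by_contra hs
  have h3 : chr p (1 : ZMod p) * ∑ c : ZMod p, chr p c = 1 * ∑ c : ZMod p, chr p c := by
    rw [one_mul]; exact h2
  exact hne (mul_right_cancel₀ hs h3)

lemma sum_chr_mul (p : ℕ) [NeZero p] (hp : p.Prime) (z : ZMod p) :
    ∑ c : ZMod p, chr p (c * z) = if z = 0 then (p : ℂ) else 0 := by
  haveI : Fact p.Prime := ⟨hp⟩
  by_cases hz : z = 0
  · simp [hz, chr_zero, Finset.card_univ, ZMod.card]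
  · rw [if_neg hz]
    have hbij : Function.Bijective (fun c : ZMod p => c * z) :=
      (Equiv.mulRight₀ z hz).bijective
    calc ∑ c : ZMod p, chr p (c * z)
        = ∑ c : ZMod p, chr p c := Fintype.sum_bijective _ hbij _ _ (fun c => rfl)
      _ = 0 := sum_chr_eq_zero p hp.one_lt

lemma sum_chr_vec (p n : ℕ) [NeZero p] (hp : p.Prime) (z : Fin n → ZMod p) :
    ∑ a : Fin n → ZMod p, chr p (∑ i, a i * z i) =
      if z = 0 then ((p : ℂ) ^ n) else 0 := by
  have h1 : ∀ a : Fin n → ZMod p, chr p (∑ i, a i * z i) = ∏ i, chr p (a i * z i) :=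
    fun a => chr_sum p Finset.univ (fun i => a i * z i)
  simp_rw [h1]
  rw [← Fintype.piFinset_univ, ← Finset.prod_univ_sum (fun _ => Finset.univ) (fun i c => chr p (c * z i))]
  have h2 : ∀ i, (∑ c : ZMod p, chr p (c * z i)) = if z i = 0 then (p:ℂ) else 0 :=
    fun i => sum_chr_mul p hp (z i)
  simp_rw [h2]
  by_cases hz : z = 0
  · simp [hz]
  · have : ∃ i, z i ≠ 0 := by
      by_contra hc
      push_neg at hc
      exact hz (funext hc)
    obtain ⟨i, hi⟩ := this
    rw [if_neg hz]
    exact Finset.prod_eq_zero (Finset.mem_univ i) (by rw [if_neg hi])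

/-- The Walsh transform of a generalized p-ary function `f : V_n → ℤ_{p^k}`,
where `V_n = (ℤ/p)^n` with the usual dot product. -/
noncomputable def walsh (p k n : ℕ) [NeZero p] [NeZero (p ^ k)]
    (f : (Fin n → ZMod p) → ZMod (p ^ k)) (a : Fin n → ZMod p) : ℂ :=
  ∑ x : Fin n → ZMod p, chr (p ^ k) (f x) * chr p (-(∑ i, a i * x i))

lemma walsh_inversion (p k n : ℕ) [NeZero p] [NeZero (p ^ k)] (hp : p.Prime)
    (f : (Fin n → ZMod p) → ZMod (p ^ k)) (x : Fin n → ZMod p) :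
    ∑ a : Fin n → ZMod p, walsh p k n f a * chr p (-(∑ i, a i * x i)) =
      (p : ℂ) ^ n * chr (p ^ k) (f (-x)) := by
  unfold walsh
  simp_rw [Finset.sum_mul]
  rw [Finset.sum_comm]
  have key : ∀ y a : Fin n → ZMod p,
      chr (p^k) (f y) * chr p (-(∑ i, a i * y i)) * chr p (-(∑ i, a i * x i)) =
      chr (p^k) (f y) * chr p (∑ i, a i * (-(y + x)) i) := by
    intro y a
    rw [mul_assoc, ← chr_add]
    congr 2
    rw [← neg_add, ← Finset.sum_add_distrib, ← Finset.sum_neg_distrib]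
    apply Finset.sum_congr rfl
    intro i _
    simp only [Pi.neg_apply, Pi.add_apply]
    ring
  simp_rw [key]
  have inner : ∀ y : Fin n → ZMod p,
      ∑ a : Fin n → ZMod p, chr (p^k) (f y) * chr p (∑ i, a i * (-(y + x)) i) =
      chr (p^k) (f y) * (if -(y+x) = 0 then ((p:ℂ)^n) else 0) := by
    intro y
    rw [← Finset.mul_sum, sum_chr_vec p n hp]
  simp_rw [inner]
  have step : ∀ y : Fin n → ZMod p,
      chr (p^k) (f y) * (if -(y+x) = 0 then ((p:ℂ)^n) else 0) =
      if y = -x then chr (p^k) (f y) * (p:ℂ)^n else 0 := by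
    intro y
    by_cases hy : y = -x
    · subst hy; simp
    · rw [if_neg hy, if_neg, mul_zero]
      intro hc
      apply hy
      have := neg_eq_zero.mp hc
      linear_combination (norm := abel) this  -- y + x = 0 → y = -x
  simp_rw [step]
  rw [Finset.sum_ite_eq' Finset.univ (-x) (fun y => chr (p^k) (f y) * (p:ℂ)^n)]
  rw [if_pos (Finset.mem_univ _)]
  ring

/-- `ξ = 1` if `p ≡ 1 (mod 4)` or `n` even, `ξ = √-1` otherwise. -/
noncomputable def xi (p n : ℕ) : ℂ :=
  if p % 4 = 1 ∨ Even n then 1 else Complex.I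

lemma isIntegral_of_pow_eq_nat (j : ℕ) (N : ℕ) (hj : j ≠ 0) (z : ℂ) (h : z ^ j = (N : ℂ)) :
    IsIntegral ℤ z := by
  refine ⟨Polynomial.X ^ j - Polynomial.C (N : ℤ), Polynomial.monic_X_pow_sub_C _ hj, ?_⟩
  simp [Polynomial.eval₂_sub, h]

lemma rat_half_not_integral (m : ℕ) (hm : Odd m) (h : IsIntegral ℤ (-(m : ℂ) / 2)) : False := by
  have hq : (algebraMap ℚ ℂ) (-(m : ℚ) / 2) = -(m : ℂ) / 2 := by simp [map_div₀, map_neg, map_natCast]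
  rw [← hq] at h
  have h2 : IsIntegral ℤ (-(m : ℚ) / 2) := by
    have := (isIntegral_algHom_iff ((algebraMap ℚ ℂ).toIntAlgHom)
      (algebraMap ℚ ℂ).injective (x := -(m : ℚ) / 2)).mp
    exact this h
  obtain ⟨z, hz⟩ := IsIntegrallyClosed.isIntegral_iff.mp h2
  have hz' : (z : ℚ) = -(m : ℚ) / 2 := by exact_mod_cast hz
  have : (2 * z : ℚ) = -(m : ℚ) := by rw [hz']; ring
  have hint : 2 * z = -(m : ℤ) := by exact_mod_cast this
  obtain ⟨l, hl⟩ := hm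
  omega

lemma rootu_eq_one (m : ℕ) (hm : Odd m) (hm1 : 0 < m) (ω κ : ℂ)
    (hκ : IsIntegral ℤ κ) (hω : ω ^ m = 1) (heq : ω = 1 + 2 * κ) : ω = 1 := by
  set B : ℂ := ∑ i ∈ Finset.range (m - 1), (2 * κ) ^ i * ((m.choose (i + 2) : ℕ) : ℂ) with hBdef
  have hsum : ∑ kk ∈ Finset.range (m + 1), (2 * κ) ^ kk * ((m.choose kk : ℕ) : ℂ) = 1 := by
    have h := add_pow (2 * κ) 1 m
    simp only [one_pow, mul_one] at h
    rw [← h]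
    rw [show (2 * κ + 1) = ω by rw [heq]; ring]
    exact hω
  -- peel off k = 0 term
  rw [Finset.sum_range_succ'] at hsum
  simp only [pow_zero, Nat.choose_zero_right, Nat.cast_one, one_mul] at hsum
  -- now: (∑ i ∈ range m, (2κ)^(i+1) * C(m,i+1)) + 1 = 1
  have hsum2 : ∑ i ∈ Finset.range m, (2 * κ) ^ (i + 1) * ((m.choose (i + 1) : ℕ) : ℂ) = 0 := by
    linear_combination hsum
  -- peel off i = 0 term: range m, m = (m-1)+1
  have hm' : m = (m - 1) + 1 := by omega
  rw [hm', Finset.sum_range_succ'] at hsum2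
  rw [← hm'] at hsum2
  set B : ℂ := ∑ i ∈ Finset.range (m - 1), (2 * κ) ^ i * ((m.choose (i + 2) : ℕ) : ℂ) with hBdef
  have hfact : ∑ i ∈ Finset.range (m - 1), (2*κ) ^ (i + 1 + 1) * ((m.choose (i + 1 + 1) : ℕ) : ℂ)
      = 2 * κ * (2 * κ * B) := by
    rw [hBdef, Finset.mul_sum, Finset.mul_sum]
    apply Finset.sum_congr rfl
    intro i _
    have : i + 1 + 1 = i + 2 := by omega
    rw [this]
    ring
  rw [hfact] at hsum2
  have hchoose1 : ((m.choose (0 + 1) : ℕ) : ℂ) = (m : ℂ) := by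
    norm_num
  rw [hchoose1] at hsum2
  have hsplit : 2 * κ * (2 * κ * B + (m:ℂ)) = 0 := by
    linear_combination hsum2
  rcases mul_eq_zero.mp hsplit with h0 | h0
  · have hk0 : κ = 0 := by
      rcases mul_eq_zero.mp h0 with h | h
      · norm_num at h
      · exact h
    rw [heq, hk0]; ring
  · exfalso
    have hκB : IsIntegral ℤ (κ * B) := by
      apply hκ.mul
      rw [hBdef]
      apply IsIntegral.sum
      intro i _
      apply IsIntegral.mul
      · apply IsIntegral.pow
        apply IsIntegral.mul
        · exact isIntegral_of_pow_eq_nat 1 2 one_ne_zero (2:ℂ) (by norm_num)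
        · exact hκ
      · exact isIntegral_of_pow_eq_nat 1 (m.choose (i+2)) one_ne_zero _ (by rw [pow_one])
    have heqhalf : κ * B = -(m:ℂ)/2 := by
      have h2 : (2:ℂ) ≠ 0 := by norm_num
      rw [eq_div_iff h2]
      linear_combination h0
    rw [heqhalf] at hκB
    exact rat_half_not_integral m hm hκB

theorem stmt_8 (p k n : ℕ) [NeZero p] [NeZero (p ^ k)] (hp : p.Prime) (hodd : Odd p)
    (hk : 1 ≤ k) (hn : 1 ≤ n)
    (f fs fss : (Fin n → ZMod p) → ZMod (p ^ k))
    (εf εfs : (Fin n → ZMod p) → ℂ)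
    (hεf : ∀ a, εf a = 1 ∨ εf a = -1) (hεfs : ∀ a, εfs a = 1 ∨ εfs a = -1)
    (hWf : ∀ a, walsh p k n f a =
      xi p n * εf a * (Real.sqrt ((p : ℝ) ^ n) : ℂ) * chr (p ^ k) (fs a))
    (hWfs : ∀ a, walsh p k n fs a =
      xi p n * εfs a * (Real.sqrt ((p : ℝ) ^ n) : ℂ) * chr (p ^ k) (fss a)) :
    ∀ x, fss x = f (-x) := by
  classical
  intro x
  set R : ℂ := (Real.sqrt ((p : ℝ) ^ n) : ℂ) with hR
  set ξ : ℂ := xi p n with hξ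
  have hp2 : 2 ≤ p := hp.two_le
  have hpodd3 : 3 ≤ p := by
    rcases hodd with ⟨l, hl⟩; omega
  -- basic facts
  have hRR : R * R = (p : ℂ) ^ n := by
    rw [hR]
    rw [← Complex.ofReal_mul, Real.mul_self_sqrt (by positivity)]
    push_cast
    ring
  have hξ2 : ξ * ξ = 1 ∨ ξ * ξ = -1 := by
    rw [hξ, xi]
    split
    · left; ring
    · right; rw [Complex.I_mul_I]
  have hξint : IsIntegral ℤ ξ := by
    rw [hξ, xi]
    split
    · exact isIntegral_of_pow_eq_nat 1 1 one_ne_zero 1 (by norm_num)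
    · refine isIntegral_of_pow_eq_nat 4 1 (by norm_num) Complex.I ?_
      rw [show (4:ℕ) = 2*2 by norm_num, pow_mul, Complex.I_sq]
      norm_num
  have hRint : IsIntegral ℤ R := by
    refine isIntegral_of_pow_eq_nat 2 (p ^ n) two_ne_zero R ?_
    rw [sq, hRR]
    push_cast
    ring
  have hchrint : ∀ z : ZMod (p^k), IsIntegral ℤ (chr (p^k) z) := by
    intro z
    refine isIntegral_of_pow_eq_nat (p^k) 1 (NeZero.ne (p^k)) _ ?_
    rw [chr_pow_eq_one]
    norm_num
  have hchrpint : ∀ z : ZMod p, IsIntegral ℤ (chr p z) := by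
    intro z
    refine isIntegral_of_pow_eq_nat p 1 (NeZero.ne p) _ ?_
    rw [chr_pow_eq_one]
    norm_num
  -- E sum
  set E : ℂ := ∑ a : Fin n → ZMod p, εf a * chr (p^k) (fs a) * chr p (-(∑ i, a i * x i)) with hE
  have hEinv : ξ * R * E = (p : ℂ) ^ n * chr (p^k) (f (-x)) := by
    rw [← walsh_inversion p k n hp f x, hE, Finset.mul_sum]
    apply Finset.sum_congr rfl
    intro a _
    rw [hWf a]
    ring
  -- T sum
  set T : ℂ := ∑ a : Fin n → ZMod p,
      (if εf a = -1 then chr (p^k) (fs a) * chr p (-(∑ i, a i * x i)) else 0) with hT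
  have hTint : IsIntegral ℤ T := by
    rw [hT]
    apply IsIntegral.sum
    intro a _
    by_cases h : εf a = -1
    · rw [if_pos h]; exact (hchrint _).mul (hchrpint _)
    · rw [if_neg h]; exact isIntegral_zero
  have hwcomm : walsh p k n fs x
      = ∑ a : Fin n → ZMod p, chr (p^k) (fs a) * chr p (-(∑ i, a i * x i)) := by
    unfold walsh
    apply Finset.sum_congr rfl
    intro a _
    congr 2
    congr 1
    exact Finset.sum_congr rfl (fun i _ => mul_comm _ _)
  have hsplit : walsh p k n fs x = E + 2 * T := by
    rw [hwcomm, hE, hT, Finset.mul_sum, ← Finset.sum_add_distrib]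
    apply Finset.sum_congr rfl
    intro a _
    rcases hεf a with h1 | h1
    · rw [h1, if_neg (by norm_num), one_mul, mul_zero, add_zero]
    · rw [h1, if_pos rfl]
      ring
  -- main equation
  set Cc : ℂ := chr (p^k) (f (-x)) with hC
  set Ccb : ℂ := chr (p^k) (-(f (-x))) with hCb
  have hCCb : Cc * Ccb = 1 := chr_mul_neg (p^k) (f (-x))
  set d : ZMod (p^k) := fss x - f (-x) with hd
  set ω : ℂ := chr (p^k) d with hω
  have hWd : chr (p^k) (fss x) = ω * Cc := by
    rw [hω, hC, ← chr_add]
    congr 1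
    rw [hd]
    ring
  -- from hWfs and hsplit:
  have hmain : (ξ * ξ) * εfs x * ((p:ℂ)^n) * (ω * Cc) - (p:ℂ)^n * Cc = 2 * (ξ * R * T) := by
    have h1 : ξ * R * walsh p k n fs x = ξ * R * E + 2 * (ξ * R * T) := by
      rw [hsplit]; ring
    rw [hEinv, hWfs x] at h1
    calc (ξ * ξ) * εfs x * ((p:ℂ)^n) * (ω * Cc) - (p:ℂ)^n * Cc
        = ξ * R * (ξ * εfs x * R * chr (p^k) (fss x)) - (p:ℂ)^n * Cc := by
          rw [hWd, ← hRR]; ring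
      _ = 2 * (ξ * R * T) := by rw [h1]; ring
  -- multiply by Ccb
  set γ : ℂ := ξ * R * T * Ccb with hγ
  have hγint : IsIntegral ℤ γ := ((hξint.mul hRint).mul hTint).mul (hchrint _)
  have hmain2 : (ξ * ξ) * εfs x * ((p:ℂ)^n) * ω - (p:ℂ)^n = 2 * γ := by
    have := congrArg (· * Ccb) hmain
    calc (ξ * ξ) * εfs x * ((p:ℂ)^n) * ω - (p:ℂ)^n
        = ((ξ * ξ) * εfs x * ((p:ℂ)^n) * (ω * Cc) - (p:ℂ)^n * Cc) * Ccb := by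
          have h1 : (ξ * ξ) * εfs x * ((p:ℂ)^n) * (ω * Cc) * Ccb
              = (ξ * ξ) * εfs x * ((p:ℂ)^n) * ω * (Cc * Ccb) := by ring
          have h2 : ((p:ℂ)^n * Cc) * Ccb = (p:ℂ)^n * (Cc * Ccb) := by ring
          rw [sub_mul, h1, h2, hCCb, mul_one, mul_one]
      _ = 2 * (ξ * R * T) * Ccb := by rw [hmain]
      _ = 2 * γ := by rw [hγ]; ring
  -- s = ±1
  have hs : (ξ * ξ) * εfs x = 1 ∨ (ξ * ξ) * εfs x = -1 := by
    rcases hξ2 with h1 | h1 <;> rcases hεfs x with h2 | h2 <;> rw [h1, h2]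
    · left; ring
    · right; ring
    · right; ring
    · left; ring
  -- get p^n (ω - 1) = 2 γ₂ with γ₂ integral
  have hpnint : IsIntegral ℤ ((p:ℂ)^n) :=
    isIntegral_of_pow_eq_nat 1 (p^n) one_ne_zero _ (by push_cast; ring)
  obtain ⟨γ₂, hγ₂int, hγ₂⟩ : ∃ γ₂ : ℂ, IsIntegral ℤ γ₂ ∧ (p:ℂ)^n * (ω - 1) = 2 * γ₂ := by
    rcases hs with h1 | h1
    · refine ⟨γ, hγint, ?_⟩
      rw [h1, one_mul] at hmain2
      linear_combination hmain2
    · refine ⟨-γ - (p:ℂ)^n, (hγint.neg).sub hpnint, ?_⟩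
      rw [h1] at hmain2
      linear_combination -hmain2
  -- p^n is odd
  have hpn_odd : Odd (p ^ n) := hodd.pow
  obtain ⟨l, hl⟩ := hpn_odd
  have hω1 : ω = 1 := by
    have hωint : IsIntegral ℤ ω := hchrint d
    set κ : ℂ := γ₂ - (l : ℂ) * (ω - 1) with hκ
    have hκint : IsIntegral ℤ κ :=
      hγ₂int.sub ((isIntegral_of_pow_eq_nat 1 l one_ne_zero _ (by rw [pow_one])).mul
        (hωint.sub (isIntegral_of_pow_eq_nat 1 1 one_ne_zero 1 (by norm_num))))
    have hωκ : ω = 1 + 2 * κ := by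
      have hpncast : ((p:ℂ)^n) = 2 * (l:ℂ) + 1 := by
        have : ((p^n : ℕ) : ℂ) = ((2 * l + 1 : ℕ) : ℂ) := by rw [← hl]
        push_cast at this
        push_cast
        linear_combination this
      have : ω - 1 = 2 * κ := by
        rw [hκ]
        have h2 : (2 * (l:ℂ) + 1) * (ω - 1) = 2 * γ₂ := by
          rw [← hpncast]; exact hγ₂
        linear_combination h2
      linear_combination this
    have hmodd : Odd (p^k) := by exact hodd.pow
    have hm1 : 0 < p^k := by positivity
    exact rootu_eq_one (p^k) hmodd hm1 ω κ hκint (chr_pow_eq_one (p^k) d) hωκ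
  have hd0 : d = 0 := (chr_eq_one_iff (p^k) d).mp hω1
  rw [hd] at hd0
  exact sub_eq_zero.mp hd0
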